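/- For a > 0, the set Hess⁺(f_a) of points where the Hessian of f_a(x, y) = (x² + y²)² − 2a²(x² − y²) is positive definite equals {(x, y) ∈ ℝ² : 3(x² + y²)² + 2a²(x² − y²) > a⁴}. -/

import Mathlib

open ContinuousLinearMap

noncomputable def L17 (a : ℝ) (p : ℝ × ℝ) : ℝ × ℝ →L[ℝ] ℝ :=
  (4 * p.1 * (p.1 ^ 2 + p.2 ^ 2) - 4 * a ^ 2 * p.1) • fst ℝ ℝ ℝ +
    (4 * p.2 * (p.1 ^ 2 + p.2 ^ 2) + 4 * a ^ 2 * p.2) • snd ℝ ℝ ℝ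

lemma hL17 (a : ℝ) (p : ℝ × ℝ) :
    HasFDerivAt (fun p : ℝ × ℝ => (p.1 ^ 2 + p.2 ^ 2) ^ 2 - 2 * a ^ 2 * (p.1 ^ 2 - p.2 ^ 2))
      (L17 a p) p := by
  have hx : HasFDerivAt (fun q : ℝ × ℝ => q.1) (fst ℝ ℝ ℝ) p := hasFDerivAt_fst
  have hy : HasFDerivAt (fun q : ℝ × ℝ => q.2) (snd ℝ ℝ ℝ) p := hasFDerivAt_snd
  have hs := (hx.mul hx).add (hy.mul hy)
  have h := (hs.mul hs).sub (((hx.mul hx).sub (hy.mul hy)).const_mul (2 * a ^ 2))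
  refine (h.congr_fderiv ?_).congr_of_eventuallyEq ?_
  swap
  · exact Filter.EventuallyEq.of_eq (funext fun q => by simp only [Pi.mul_apply, Pi.add_apply, Pi.sub_apply]; ring)
  · refine ContinuousLinearMap.ext fun v => ?_
    simp [L17, smul_eq_mul]
    ring

noncomputable def M17 (a : ℝ) (p : ℝ × ℝ) : ℝ × ℝ →L[ℝ] ℝ × ℝ →L[ℝ] ℝ :=
  ((12 * p.1 ^ 2 + 4 * p.2 ^ 2 - 4 * a ^ 2) • fst ℝ ℝ ℝ +
      (8 * p.1 * p.2) • snd ℝ ℝ ℝ).smulRight (fst ℝ ℝ ℝ) +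
    ((8 * p.1 * p.2) • fst ℝ ℝ ℝ +
      (4 * p.1 ^ 2 + 12 * p.2 ^ 2 + 4 * a ^ 2) • snd ℝ ℝ ℝ).smulRight (snd ℝ ℝ ℝ)

lemma hM17 (a : ℝ) (p : ℝ × ℝ) : HasFDerivAt (L17 a) (M17 a p) p := by
  have hx : HasFDerivAt (fun q : ℝ × ℝ => q.1) (fst ℝ ℝ ℝ) p := hasFDerivAt_fst
  have hy : HasFDerivAt (fun q : ℝ × ℝ => q.2) (snd ℝ ℝ ℝ) p := hasFDerivAt_snd
  have hc1 : HasFDerivAt (fun q : ℝ × ℝ => 4 * q.1 * (q.1 ^ 2 + q.2 ^ 2) - 4 * a ^ 2 * q.1)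
      ((12 * p.1 ^ 2 + 4 * p.2 ^ 2 - 4 * a ^ 2) • fst ℝ ℝ ℝ + (8 * p.1 * p.2) • snd ℝ ℝ ℝ) p := by
    have h := ((hx.const_mul 4).mul ((hx.mul hx).add (hy.mul hy))).sub (hx.const_mul (4 * a ^ 2))
    refine (h.congr_fderiv ?_).congr_of_eventuallyEq ?_
    swap
    · exact Filter.EventuallyEq.of_eq (funext fun q => by simp only [Pi.mul_apply, Pi.add_apply, Pi.sub_apply]; ring)
    · refine ContinuousLinearMap.ext fun v => ?_
      simp [smul_eq_mul]
      ring
  have hc2 : HasFDerivAt (fun q : ℝ × ℝ => 4 * q.2 * (q.1 ^ 2 + q.2 ^ 2) + 4 * a ^ 2 * q.2)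
      ((8 * p.1 * p.2) • fst ℝ ℝ ℝ + (4 * p.1 ^ 2 + 12 * p.2 ^ 2 + 4 * a ^ 2) • snd ℝ ℝ ℝ) p := by
    have h := ((hy.const_mul 4).mul ((hx.mul hx).add (hy.mul hy))).add (hy.const_mul (4 * a ^ 2))
    refine (h.congr_fderiv ?_).congr_of_eventuallyEq ?_
    swap
    · exact Filter.EventuallyEq.of_eq (funext fun q => by simp only [Pi.mul_apply, Pi.add_apply, Pi.sub_apply]; ring)
    · refine ContinuousLinearMap.ext fun v => ?_
      simp [smul_eq_mul]
      ring
  have h1 := hc1.smul (hasFDerivAt_const (fst ℝ ℝ ℝ) p)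
  have h2 := hc2.smul (hasFDerivAt_const (snd ℝ ℝ ℝ) p)
  have h := h1.add h2
  refine h.congr_fderiv ?_
  refine ContinuousLinearMap.ext fun v => ContinuousLinearMap.ext fun w => ?_
  simp [M17, smul_eq_mul]

lemma M17_apply (a : ℝ) (p v w : ℝ × ℝ) : M17 a p v w =
    ((12 * p.1 ^ 2 + 4 * p.2 ^ 2 - 4 * a ^ 2) * v.1 + 8 * p.1 * p.2 * v.2) * w.1 +
      (8 * p.1 * p.2 * v.1 + (4 * p.1 ^ 2 + 12 * p.2 ^ 2 + 4 * a ^ 2) * v.2) * w.2 := by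
  simp [M17, smul_eq_mul]

set_option maxHeartbeats 1600000 in
theorem stmt_17 (a : ℝ) (ha : 0 < a)
    (f : ℝ × ℝ → ℝ)
    (hf : f = fun p => (p.1 ^ 2 + p.2 ^ 2) ^ 2 - 2 * a ^ 2 * (p.1 ^ 2 - p.2 ^ 2)) :
    {p : ℝ × ℝ | ∀ v : ℝ × ℝ, v ≠ 0 → 0 < fderiv ℝ (fderiv ℝ f) p v v} =
      {p : ℝ × ℝ |
        a ^ 4 < 3 * (p.1 ^ 2 + p.2 ^ 2) ^ 2 + 2 * a ^ 2 * (p.1 ^ 2 - p.2 ^ 2)} := by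
  have hfd : fderiv ℝ f = L17 a := by
    funext q
    exact (hf ▸ hL17 a q : HasFDerivAt f (L17 a q) q).fderiv
  ext p
  obtain ⟨x, y⟩ := p
  simp only [Set.mem_setOf_eq, hfd]
  have hMd : fderiv ℝ (L17 a) (x, y) = M17 a (x, y) := (hM17 a (x, y)).fderiv
  rw [hMd]
  constructor
  · intro h
    have hA := h (1, 0) (by norm_num [Prod.ext_iff])
    rw [M17_apply] at hA
    norm_num at hA
    have hB := h (8 * x * y, -(12 * x ^ 2 + 4 * y ^ 2 - 4 * a ^ 2))
      (by
        simp only [ne_eq, Prod.mk_eq_zero, not_and]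
        intro _ h2
        nlinarith)
    rw [M17_apply] at hB
    norm_num at hB
    nlinarith [hA, hB]
  · intro h v hv
    rw [M17_apply]
    have hC : 0 < 4 * x ^ 2 + 12 * y ^ 2 + 4 * a ^ 2 := by positivity
    have hA : 0 < 12 * x ^ 2 + 4 * y ^ 2 - 4 * a ^ 2 := by nlinarith [h, hC, sq_nonneg (x * y)]
    have hdet : 0 < (12 * x ^ 2 + 4 * y ^ 2 - 4 * a ^ 2) * (4 * x ^ 2 + 12 * y ^ 2 + 4 * a ^ 2)
        - (8 * x * y) ^ 2 := by nlinarith [h]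
    rcases eq_or_ne v.2 0 with h2 | h2
    · have h1 : v.1 ≠ 0 := by
        intro h1
        exact hv (Prod.ext h1 h2)
      have := sq_pos_of_ne_zero h1
      rw [h2]
      nlinarith [mul_pos hA this]
    · have hv2 := sq_pos_of_ne_zero h2
      nlinarith [sq_nonneg ((12 * x ^ 2 + 4 * y ^ 2 - 4 * a ^ 2) * v.1 + 8 * x * y * v.2),
        mul_pos hdet hv2, hA]
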